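/- Let q be a prime power, let M ≥ 1 and k ≥ 0 be integers, and let A(X) ∈ 𝔽_q[X] with deg(A) < Mq. Suppose that for every ℓ with 0 ≤ ℓ < M, the remainder of the ℓ-th Hasse derivative A^{[ℓ]}(X) upon division by Λ(X) = X^q − X has degree at most k. Then A has pseudodegree at most k, i.e., for every ℓ ≥ 0 the remainder of A^{[ℓ]}(X) upon division by Λ(X) has degree at most k. -/

import Mathlib

open Polynomial

namespace Stmt9Aux

variable {F : Type*} [Field F] [Fintype F]

private lemma lam_monic : (X ^ Fintype.card F - X : F[X]).Monic :=
  (monic_X_pow _).sub_of_left (by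
    rw [degree_X, degree_X_pow]; exact_mod_cast Fintype.one_lt_card)

private lemma lam_degree : (X ^ Fintype.card F - X : F[X]).degree = Fintype.card F := by
  rw [degree_sub_eq_left_of_degree_lt, degree_X_pow]
  rw [degree_X, degree_X_pow]; exact_mod_cast Fintype.one_lt_card

private lemma hasse_lam (j : ℕ) :
    ∃ d : F, (X ^ Fintype.card F - X : F[X]) ∣
      hasseDeriv j (X ^ Fintype.card F - X) - C d := by
  set q := Fintype.card F with hq
  clear_value q
  rcases Nat.eq_zero_or_pos j with rfl | hj
  · exact ⟨0, by simp [hasseDeriv_zero']⟩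
  have h1 : hasseDeriv j (X ^ q : F[X]) = C (if j = q then 1 else 0 : F) := by
    rw [← monomial_one_one_eq_X, monomial_pow, one_pow, one_mul, hasseDeriv_monomial]
    by_cases hjq : j = q
    · simp [hjq]
    · have hchoose : ((q.choose j : ℕ) : F) = 0 := by
        obtain ⟨n, hp, hcard⟩ := FiniteField.card F (ringChar F)
        have : ringChar F ∣ q.choose j := by
          rw [hq, hcard]
          exact hp.dvd_choose_pow hj.ne' (by rw [← hcard, ← hq]; exact hjq)
        exact (CharP.cast_eq_zero_iff F (ringChar F) _).2 this
      simp [hjq, hchoose]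
  have h2 : hasseDeriv j (X : F[X]) = C (if j = 1 then 1 else 0 : F) := by
    rcases eq_or_lt_of_le (show 1 ≤ j from hj) with h | h
    · rw [← h]; simp [hasseDeriv_one']
    · rw [hasseDeriv_X _ h, if_neg (by omega)]; simp
  refine ⟨(if j = q then 1 else 0) - (if j = 1 then 1 else 0), ?_⟩
  rw [map_sub, h1, h2, ← C_sub, sub_self]
  exact dvd_zero _

private lemma dvd_mul_congr {g x y : F[X]} {d c : F}
    (hx : g ∣ x - C d) (hy : g ∣ y - C c) : g ∣ x * y - C (d * c) := by
  have h : x * y - C (d * c) = x * (y - C c) + (x - C d) * C c := by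
    rw [C_mul]; ring
  rw [h]
  exact dvd_add (hy.mul_left x) (hx.mul_right _)

private lemma dvd_sum_congr {g : F[X]} {ι : Type*} (s : Finset ι) (f : ι → F[X])
    (h : ∀ x ∈ s, ∃ c : F, g ∣ f x - C c) :
    ∃ c : F, g ∣ (∑ x ∈ s, f x) - C c := by
  classical
  choose c hc using h
  refine ⟨∑ x ∈ s.attach, c x x.2, ?_⟩
  rw [← Finset.sum_attach s f, map_sum, ← Finset.sum_sub_distrib]
  exact Finset.dvd_sum fun x _ => hc x x.2

private lemma hasse_lam_pow : ∀ i j : ℕ,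
    ∃ c : F, (X ^ Fintype.card F - X : F[X]) ∣
      hasseDeriv j ((X ^ Fintype.card F - X) ^ i) - C c
  | 0, j => by
    rcases Nat.eq_zero_or_pos j with rfl | hj
    · exact ⟨1, by simp [hasseDeriv_zero']⟩
    · exact ⟨0, by simp [pow_zero, hasseDeriv_apply_one _ hj]⟩
  | (i + 1), j => by
    rw [pow_succ, mul_comm, hasseDeriv_mul]
    apply dvd_sum_congr
    rintro ⟨a, b⟩ _
    obtain ⟨d, hd⟩ := hasse_lam (F := F) a
    obtain ⟨c, hc⟩ := hasse_lam_pow i b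
    exact ⟨d * c, dvd_mul_congr hd hc⟩


private lemma degree_hasse_le (a : ℕ) (B : F[X]) : (hasseDeriv a B).degree ≤ B.degree := by
  by_cases h : hasseDeriv a B = 0
  · simp [h]
  have hB : B ≠ 0 := by rintro rfl; simp at h
  rw [degree_eq_natDegree h, degree_eq_natDegree hB]
  exact_mod_cast le_trans (natDegree_hasseDeriv_le B a) (Nat.sub_le _ _)

private lemma term_congr (B : F[X]) (i ℓ : ℕ) :
    ∃ r : F[X], r.degree ≤ B.degree ∧
      (X ^ Fintype.card F - X : F[X]) ∣
        hasseDeriv ℓ (B * (X ^ Fintype.card F - X) ^ i) - r := by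
  classical
  rw [hasseDeriv_mul]
  have h : ∀ x ∈ Finset.HasAntidiagonal.antidiagonal ℓ, ∃ r : F[X], r.degree ≤ B.degree ∧
      (X ^ Fintype.card F - X : F[X]) ∣
        hasseDeriv x.1 B * hasseDeriv x.2 ((X ^ Fintype.card F - X) ^ i) - r := by
    intro x _
    obtain ⟨c, hc⟩ := hasse_lam_pow (F := F) i x.2
    refine ⟨hasseDeriv x.1 B * C c, ?_, ?_⟩
    · refine le_trans (degree_mul_le _ _) (le_trans ?_ (degree_hasse_le x.1 B))
      calc (hasseDeriv x.1 B).degree + (C c).degree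
          ≤ (hasseDeriv x.1 B).degree + 0 := add_le_add (le_refl _) degree_C_le
        _ = (hasseDeriv x.1 B).degree := add_zero _
    · have heq : hasseDeriv x.1 B * hasseDeriv x.2 ((X ^ Fintype.card F - X) ^ i) -
          hasseDeriv x.1 B * C c
          = hasseDeriv x.1 B * (hasseDeriv x.2 ((X ^ Fintype.card F - X) ^ i) - C c) := by
        ring
      rw [heq]
      exact hc.mul_left _
  choose r hr1 hr2 using h
  refine ⟨∑ x ∈ (Finset.HasAntidiagonal.antidiagonal ℓ).attach, r x x.2, ?_, ?_⟩
  · exact le_trans (degree_sum_le _ _) (Finset.sup_le fun x _ => hr1 x x.2)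
  · rw [← Finset.sum_attach (Finset.HasAntidiagonal.antidiagonal ℓ)
      (fun x => hasseDeriv x.1 B * hasseDeriv x.2 ((X ^ Fintype.card F - X) ^ i)),
      ← Finset.sum_sub_distrib]
    exact Finset.dvd_sum fun x _ => hr2 x x.2

private lemma mod_congr {g p r : F[X]} (hg : g.Monic) (h : g ∣ p - r) :
    p %ₘ g = r %ₘ g := by
  have h0 := (modByMonic_eq_zero_iff_dvd hg).2 h
  rw [sub_modByMonic] at h0
  exact sub_eq_zero.1 h0

private lemma key_forward {k : ℕ} (hkq : (k : WithBot ℕ) < (Fintype.card F : ℕ))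
    {M : ℕ} (B : Fin M → F[X]) (hB : ∀ i, (B i).degree ≤ (k : WithBot ℕ)) (ℓ : ℕ) :
    ((hasseDeriv ℓ (∑ i, B i * (X ^ Fintype.card F - X) ^ (i : ℕ))) %ₘ
      (X ^ Fintype.card F - X)).degree ≤ (k : WithBot ℕ) := by
  classical
  choose r hr1 hr2 using fun i : Fin M => term_congr (B i) (i : ℕ) ℓ
  have hdvd : (X ^ Fintype.card F - X : F[X]) ∣
      hasseDeriv ℓ (∑ i, B i * (X ^ Fintype.card F - X) ^ (i : ℕ)) - ∑ i, r i := by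
    rw [map_sum, ← Finset.sum_sub_distrib]
    exact Finset.dvd_sum fun i _ => hr2 i
  have hdeg : (∑ i, r i).degree ≤ (k : WithBot ℕ) :=
    le_trans (degree_sum_le _ _) (Finset.sup_le fun i _ => le_trans (hr1 i) (hB i))
  rw [mod_congr lam_monic hdvd,
    (modByMonic_eq_self_iff lam_monic).2 (by rw [lam_degree]; exact lt_of_le_of_lt hdeg hkq)]
  exact hdeg

private lemma vanish {N : ℕ} {A : F[X]}
    (hdeg : A.degree < ((N * Fintype.card F : ℕ) : WithBot ℕ))
    (h : ∀ ℓ < N, (X ^ Fintype.card F - X : F[X]) ∣ hasseDeriv ℓ A) : A = 0 := by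
  classical
  by_contra hA0
  have hroot : ∀ a : F, (X - C a) ^ N ∣ A := by
    intro a
    have h1 : (X : F[X]) ^ N ∣ taylor a A := by
      rw [X_pow_dvd_iff]
      intro d hd
      rw [taylor_coeff]
      obtain ⟨u, hu⟩ := h d hd
      rw [hu, eval_mul, eval_sub, eval_pow, eval_X, FiniteField.pow_card, sub_self, zero_mul]
    have h2 := map_dvd (taylorAlgHom (R := F) (-a)) h1
    simp only [taylorAlgHom_apply, map_pow, taylor_X, taylor_taylor,
      neg_add_cancel, taylor_zero] at h2
    rwa [C_neg, ← sub_eq_add_neg] at h2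
  have hle : (N • Finset.univ.val : Multiset F) ≤ A.roots := by
    rw [Multiset.le_iff_count]
    intro a
    rw [Multiset.count_nsmul, Multiset.count_univ, mul_one, count_roots]
    exact (le_rootMultiplicity_iff hA0).2 (hroot a)
  have hcard := Multiset.card_le_card hle
  rw [Multiset.card_nsmul] at hcard
  have h2 := A.card_roots'
  have h3 : A.natDegree < N * Fintype.card F := (natDegree_lt_iff_degree_lt hA0).2 hdeg
  have h4 : Multiset.card (Finset.univ.val : Multiset F) = Fintype.card F := rfl
  rw [h4] at hcard
  omega

private lemma lam_unique : ∀ (N : ℕ) (B : ℕ → F[X]),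
    (∀ i, (B i).degree < ((Fintype.card F : ℕ) : WithBot ℕ)) →
    (∑ i ∈ Finset.range N, B i * (X ^ Fintype.card F - X) ^ i) = 0 → ∀ i < N, B i = 0 := by
  intro N
  induction N with
  | zero => intro B _ _ i hi; omega
  | succ n ih =>
    intro B hB hsum i hi
    rw [Finset.sum_range_succ'] at hsum
    have hfac : (∑ i ∈ Finset.range n, B (i + 1) * (X ^ Fintype.card F - X) ^ (i + 1))
        = (∑ i ∈ Finset.range n, B (i + 1) * (X ^ Fintype.card F - X) ^ i) *
          (X ^ Fintype.card F - X) := by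
      rw [Finset.sum_mul]
      exact Finset.sum_congr rfl fun j _ => by rw [pow_succ, mul_assoc]
    rw [hfac, pow_zero, mul_one] at hsum
    have hB0 : B 0 = 0 := by
      refine eq_zero_of_dvd_of_degree_lt ⟨-(∑ i ∈ Finset.range n,
        B (i + 1) * (X ^ Fintype.card F - X) ^ i), ?_⟩ (by rw [lam_degree]; exact hB 0)
      rw [mul_neg, eq_comm, neg_eq_iff_add_eq_zero, add_comm, ← hsum]
      ring
    have hT : (∑ i ∈ Finset.range n, B (i + 1) * (X ^ Fintype.card F - X) ^ i) = 0 := by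
      rcases mul_eq_zero.1 (by rw [← hsum, hB0, add_zero] : (∑ i ∈ Finset.range n,
          B (i + 1) * (X ^ Fintype.card F - X) ^ i) * (X ^ Fintype.card F - X) = 0) with h | h
      · exact h
      · exact absurd h lam_monic.ne_zero
    rcases Nat.eq_zero_or_pos i with rfl | hi0
    · exact hB0
    · obtain ⟨j, rfl⟩ : ∃ j, i = j + 1 := ⟨i - 1, by omega⟩
      exact ih (fun m => B (m + 1)) (fun m => hB (m + 1)) hT j (by omega)


private lemma degA'_lt {k M : ℕ} (hkq : k < Fintype.card F)
    (B : Fin M → F[X]) (hB : ∀ i, (B i).degree ≤ (k : WithBot ℕ)) :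
    (∑ i, B i * (X ^ Fintype.card F - X) ^ (i : ℕ)).degree
      < ((M * Fintype.card F : ℕ) : WithBot ℕ) := by
  refine lt_of_le_of_lt (degree_sum_le _ _) ((Finset.sup_lt_iff (WithBot.bot_lt_coe _)).2 ?_)
  intro i _
  rcases eq_or_ne (B i * (X ^ Fintype.card F - X) ^ (i : ℕ)) 0 with h0 | h0
  · rw [h0, degree_zero]; exact WithBot.bot_lt_coe _
  have hBi : B i ≠ 0 := fun h => h0 (by rw [h, zero_mul])
  rw [degree_eq_natDegree h0]
  have h1 : (B i).natDegree ≤ k := natDegree_le_iff_degree_le.2 (hB i)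
  have h2 : ((X ^ Fintype.card F - X : F[X]) ^ (i : ℕ)).natDegree
      = (i : ℕ) * Fintype.card F := by
    rw [natDegree_pow, natDegree_eq_of_degree_eq_some lam_degree]
  have h3 := natDegree_mul_le (p := B i) (q := (X ^ Fintype.card F - X : F[X]) ^ (i : ℕ))
  have h4 : (B i * (X ^ Fintype.card F - X) ^ (i : ℕ)).natDegree < M * Fintype.card F := by
    have hi : (i : ℕ) + 1 ≤ M := i.2
    have : (i : ℕ) * Fintype.card F + Fintype.card F ≤ M * Fintype.card F := by
      calc (i : ℕ) * Fintype.card F + Fintype.card F = ((i : ℕ) + 1) * Fintype.card F := by ring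
        _ ≤ M * Fintype.card F := Nat.mul_le_mul_right _ hi
    omega
  exact_mod_cast h4

variable (F) in
private noncomputable def theta (M k : ℕ) (hk : k < Fintype.card F) :
    (Fin M → degreeLE F (k : ℕ)) →ₗ[F] (Fin M → degreeLE F (k : ℕ)) where
  toFun B := fun ℓ =>
    ⟨(hasseDeriv (ℓ : ℕ) (∑ i, (B i : F[X]) * (X ^ Fintype.card F - X) ^ (i : ℕ))) %ₘ
        (X ^ Fintype.card F - X),
      mem_degreeLE.2 (key_forward (by exact_mod_cast hk) (fun i => (B i : F[X]))
        (fun i => mem_degreeLE.1 (B i).2) (ℓ : ℕ))⟩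
  map_add' B B' := by
    funext ℓ
    apply Subtype.ext
    show (hasseDeriv (ℓ : ℕ) (∑ i, (((B + B') i : F[X])) * _)) %ₘ _ = _
    have h : (∑ i, (((B + B') i : F[X])) * (X ^ Fintype.card F - X) ^ (i : ℕ))
        = (∑ i, ((B i : F[X])) * (X ^ Fintype.card F - X) ^ (i : ℕ))
          + (∑ i, ((B' i : F[X])) * (X ^ Fintype.card F - X) ^ (i : ℕ)) := by
      rw [← Finset.sum_add_distrib]
      refine Finset.sum_congr rfl fun i _ => ?_
      simp [add_mul]
    rw [h, map_add, add_modByMonic]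
    rfl
  map_smul' c B := by
    funext ℓ
    apply Subtype.ext
    show (hasseDeriv (ℓ : ℕ) (∑ i, (((c • B) i : F[X])) * _)) %ₘ _ = _
    have h : (∑ i, (((c • B) i : F[X])) * (X ^ Fintype.card F - X) ^ (i : ℕ))
        = c • (∑ i, ((B i : F[X])) * (X ^ Fintype.card F - X) ^ (i : ℕ)) := by
      rw [Finset.smul_sum]
      refine Finset.sum_congr rfl fun i _ => ?_
      simp [smul_mul_assoc]
    rw [h, map_smul, smul_modByMonic]
    rfl

private instance (k : ℕ) : FiniteDimensional F (degreeLE F (k : ℕ)) := by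
  rw [← degreeLT_succ_eq_degreeLE]
  exact Module.Finite.equiv (degreeLTEquiv F (k + 1)).symm

private lemma theta_inj (M k : ℕ) (hk : k < Fintype.card F) :
    Function.Injective (theta F M k hk) := by
  classical
  rw [← LinearMap.ker_eq_bot, LinearMap.ker_eq_bot']
  intro B hB
  have hBdeg : ∀ i, ((B i : F[X])).degree ≤ (k : WithBot ℕ) := fun i => mem_degreeLE.1 (B i).2
  set A' := ∑ i, (B i : F[X]) * (X ^ Fintype.card F - X) ^ (i : ℕ) with hA'
  have hzero : A' = 0 := by
    apply vanish (N := M) (degA'_lt hk _ hBdeg)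
    intro ℓ hℓ
    have hcomp := congrFun hB ⟨ℓ, hℓ⟩
    have hval : (hasseDeriv ℓ A') %ₘ (X ^ Fintype.card F - X) = 0 := by
      have := congrArg Subtype.val hcomp
      exact this
    exact (modByMonic_eq_zero_iff_dvd lam_monic).1 hval
  have hBz : ∀ i : Fin M, (B i : F[X]) = 0 := by
    intro i
    set Bext : ℕ → F[X] := fun m => if h : m < M then (B ⟨m, h⟩ : F[X]) else 0 with hBext
    have hsum : (∑ m ∈ Finset.range M, Bext m * (X ^ Fintype.card F - X) ^ m) = 0 := by
      rw [← hzero, hA', ← Fin.sum_univ_eq_sum_range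
        (fun m => Bext m * (X ^ Fintype.card F - X) ^ m) M]
      refine Finset.sum_congr rfl fun j _ => ?_
      simp [hBext, j.2]
    have hdeg : ∀ m, (Bext m).degree < ((Fintype.card F : ℕ) : WithBot ℕ) := by
      intro m
      by_cases h : m < M
      · simp only [hBext, dif_pos h]
        exact lt_of_le_of_lt (hBdeg ⟨m, h⟩) (by exact_mod_cast hk)
      · simp only [hBext, dif_neg h, degree_zero]
        exact WithBot.bot_lt_coe _
    have := lam_unique M Bext hdeg hsum (i : ℕ) i.2
    simpa [hBext, i.2] using this
  funext i
  exact Subtype.ext (by rw [hBz i]; rfl)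

end Stmt9Aux

/-- Let `M ≥ 1`, `k ≥ 0`, and `A ∈ 𝔽_q[X]` with `deg(A) < Mq`. If for every
`ℓ < M` the remainder of `A^{[ℓ]}` upon division by `Λ(X) = X^q - X` has degree at most `k`,
then this holds for every `ℓ ≥ 0`, i.e. `A` has pseudodegree at most `k`. -/
theorem stmt9 {F : Type*} [Field F] [Fintype F] (q : ℕ) (hq : Fintype.card F = q)
    (M k : ℕ) (hM : 1 ≤ M) (A : F[X]) (hdeg : A.degree < ((M * q : ℕ) : WithBot ℕ))
    (hlow : ∀ ℓ < M, ((hasseDeriv ℓ A) %ₘ (X ^ q - X)).degree ≤ (k : WithBot ℕ)) :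
    ∀ ℓ : ℕ, ((hasseDeriv ℓ A) %ₘ (X ^ q - X)).degree ≤ (k : WithBot ℕ) := by
  subst hq
  by_cases hqk : Fintype.card F ≤ k + 1
  · intro ℓ
    have h := degree_modByMonic_lt (hasseDeriv ℓ A) Stmt9Aux.lam_monic
    rw [Stmt9Aux.lam_degree] at h
    rcases eq_or_ne ((hasseDeriv ℓ A) %ₘ (X ^ Fintype.card F - X)) 0 with h0 | h0
    · rw [h0, degree_zero]; exact bot_le
    rw [degree_eq_natDegree h0] at h ⊢
    have h1 : ((hasseDeriv ℓ A) %ₘ (X ^ Fintype.card F - X)).natDegree < Fintype.card F := by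
      exact_mod_cast h
    exact_mod_cast (by omega :
      ((hasseDeriv ℓ A) %ₘ (X ^ Fintype.card F - X)).natDegree ≤ k)
  push_neg at hqk
  have hk : k < Fintype.card F := by omega
  obtain ⟨B, hB⟩ := (LinearMap.injective_iff_surjective.1 (Stmt9Aux.theta_inj M k hk))
    (fun ℓ => ⟨(hasseDeriv (ℓ : ℕ) A) %ₘ (X ^ Fintype.card F - X),
      mem_degreeLE.2 (hlow ℓ ℓ.2)⟩)
  have hBdeg : ∀ i, ((B i : F[X])).degree ≤ (k : WithBot ℕ) := fun i => mem_degreeLE.1 (B i).2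
  set A' := ∑ i, (B i : F[X]) * (X ^ Fintype.card F - X) ^ (i : ℕ) with hA'
  have hmods : ∀ ℓ, ∀ hℓ : ℓ < M, (hasseDeriv ℓ A') %ₘ (X ^ Fintype.card F - X)
      = (hasseDeriv ℓ A) %ₘ (X ^ Fintype.card F - X) := by
    intro ℓ hℓ
    exact congrArg Subtype.val (congrFun hB ⟨ℓ, hℓ⟩)
  have hAA' : A = A' := by
    have hz : A - A' = 0 := by
      apply Stmt9Aux.vanish (N := M)
      · exact lt_of_le_of_lt (degree_sub_le _ _) (max_lt hdeg (Stmt9Aux.degA'_lt hk _ hBdeg))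
      · intro ℓ hℓ
        rw [map_sub, ← modByMonic_eq_zero_iff_dvd Stmt9Aux.lam_monic, sub_modByMonic,
          hmods ℓ hℓ, sub_self]
    exact sub_eq_zero.1 hz
  intro ℓ
  rw [hAA']
  exact Stmt9Aux.key_forward (by exact_mod_cast hk) _ hBdeg ℓ
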